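/- For all nonnegative integers n, m, p: Q(n,m,p) = Σ_{k=0}^{⌊n/2⌋} Σ_{l=0}^{⌊m/2⌋} (−1)^l · P(n−2k, m−2l, p) · Q(k, l, p). -/

import Mathlib

/-- `P n m p` : number of integer partitions of `n` into exactly `m` parts
with each part at most `p`. -/
def P (n m p : ℕ) : ℕ :=
  Fintype.card {π : n.Partition // π.parts.card = m ∧ ∀ i ∈ π.parts, i ≤ p}

/-- `Q n m p` : number of integer partitions of `n` into exactly `m` distinct parts
with each part at most `p`. -/
def Q (n m p : ℕ) : ℕ :=
  Fintype.card {π : n.Partition // π.parts.card = m ∧ π.parts.Nodup ∧ ∀ i ∈ π.parts, i ≤ p}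

def wS (p : ℕ) (s : Finset (Fin p)) : ℕ := ∑ i ∈ s, ((i : ℕ) + 1)
def wC (p : ℕ) (c : Fin p → ℕ) : ℕ := ∑ i : Fin p, ((i : ℕ) + 1) * c i
def tC (p : ℕ) (c : Fin p → ℕ) : ℕ := ∑ i : Fin p, c i

def Pset (p a b : ℕ) : Finset (Fin p → ℕ) :=
  (Finset.Iic (fun _ => b)).filter fun c => wC p c = a ∧ tC p c = b

def Qset (p a b : ℕ) : Finset (Finset (Fin p)) :=
  Finset.univ.filter fun s => wS p s = a ∧ s.card = b

section helpers
variable {p : ℕ}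

lemma sum_ite_fin {a : ℕ} (ha : 1 ≤ a) (hap : a ≤ p) (f : Fin p → ℕ) :
    ∑ i : Fin p, (if ((i : ℕ) + 1) = a then f i else 0) = f ⟨a - 1, by omega⟩ := by
  rw [Finset.sum_eq_single (⟨a - 1, by omega⟩ : Fin p)]
  · rw [if_pos (by simp; omega)]
  · intro b _ hb
    rw [if_neg]
    intro h
    exact hb (Fin.ext (by simp; omega))
  · simp

lemma count_card_sum (M : Multiset ℕ) (hM : ∀ x ∈ M, 1 ≤ x ∧ x ≤ p) :
    (∑ i : Fin p, M.count ((i : ℕ) + 1) = Multiset.card M) ∧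
    (∑ i : Fin p, ((i : ℕ) + 1) * M.count ((i : ℕ) + 1) = M.sum) := by
  induction M using Multiset.induction with
  | empty => simp
  | cons a M ih =>
    obtain ⟨ha1, hap⟩ := hM a (Multiset.mem_cons_self a M)
    obtain ⟨ih1, ih2⟩ := ih (fun x hx => hM x (Multiset.mem_cons_of_mem hx))
    constructor
    · simp only [Multiset.count_cons, Finset.sum_add_distrib, ih1]
      rw [sum_ite_fin ha1 hap (fun _ => 1)]
      simp
    · simp only [Multiset.count_cons, mul_add, Finset.sum_add_distrib, ih2, mul_ite, mul_one,
        mul_zero]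
      rw [sum_ite_fin ha1 hap (fun i => (i : ℕ) + 1)]
      simp
      omega

def NC (c : Fin p → ℕ) : Multiset ℕ := ∑ i : Fin p, Multiset.replicate (c i) ((i : ℕ) + 1)

lemma mem_NC {c : Fin p → ℕ} {x : ℕ} (hx : x ∈ NC c) : 1 ≤ x ∧ x ≤ p := by
  rw [NC, Multiset.mem_sum] at hx
  obtain ⟨i, -, hi⟩ := hx
  rw [Multiset.eq_of_mem_replicate hi]
  omega

lemma card_NC (c : Fin p → ℕ) : Multiset.card (NC c) = tC p c := by
  rw [NC, Multiset.card_sum]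
  simp [tC]

lemma sum_NC (c : Fin p → ℕ) : (NC c).sum = wC p c := by
  rw [NC, Multiset.sum_sum]
  simp [wC, Multiset.sum_replicate, mul_comm]

lemma count_NC (c : Fin p → ℕ) (i : Fin p) : (NC c).count ((i : ℕ) + 1) = c i := by
  rw [NC, show (Multiset.count ((i : ℕ) + 1) (∑ j : Fin p, Multiset.replicate (c j) ((j : ℕ) + 1)))
      = (Multiset.countAddMonoidHom ((i : ℕ) + 1)) (∑ j : Fin p, Multiset.replicate (c j) ((j : ℕ) + 1)) from rfl,
    map_sum]
  simp only [show ∀ (M : Multiset ℕ), (Multiset.countAddMonoidHom ((i:ℕ)+1)) M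
    = Multiset.count ((i:ℕ)+1) M from fun _ => rfl, Multiset.count_replicate]
  rw [Finset.sum_eq_single i]
  · simp
  · intro b _ hb
    rw [if_neg (by simpa [Fin.ext_iff] using hb)]
  · simp

lemma count_NC' (c : Fin p → ℕ) (x : ℕ) (hx : ¬(1 ≤ x ∧ x ≤ p)) : (NC c).count x = 0 := by
  apply Multiset.count_eq_zero_of_notMem
  intro h
  exact hx (mem_NC h)

lemma P_eq (n m : ℕ) : P n m p = (Pset p n m).card := by
  rw [P, Fintype.card_subtype]
  refine Finset.card_bij' (fun π _ => fun j : Fin p => π.parts.count ((j : ℕ) + 1))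
    (fun c hc => ⟨NC c, fun hi => by have := mem_NC hi; omega, by
      have h := hc
      simp only [Pset, Finset.mem_filter] at h
      rw [sum_NC]
      exact h.2.1⟩) ?hi ?hj ?left ?right
  case hi =>
    intro π hπ
    rw [Finset.mem_filter] at hπ
    obtain ⟨-, hcard, hbd⟩ := hπ
    have hM : ∀ x ∈ π.parts, 1 ≤ x ∧ x ≤ p := fun x hx => ⟨π.parts_pos hx, hbd x hx⟩
    obtain ⟨h1, h2⟩ := count_card_sum π.parts hM
    simp only [Pset, Finset.mem_filter, Finset.mem_Iic]
    refine ⟨fun j => ?_, by rw [wC, h2, π.parts_sum], by rw [tC, h1, hcard]⟩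
    calc π.parts.count ((j : ℕ) + 1) ≤ Multiset.card π.parts := Multiset.count_le_card _ _
    _ = m := hcard
  case hj =>
    intro c hc
    have h := hc
    simp only [Pset, Finset.mem_filter, Finset.mem_Iic] at h
    obtain ⟨-, hw, ht⟩ := h
    rw [Finset.mem_filter]
    refine ⟨Finset.mem_univ _, ?_, fun x hx => (mem_NC hx).2⟩
    show Multiset.card (NC c) = m
    rw [card_NC, ht]
  case left =>
    intro π hπ
    rw [Finset.mem_filter] at hπ
    obtain ⟨-, hcard, hbd⟩ := hπ
    ext1
    show NC _ = π.parts
    ext a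
    by_cases ha : 1 ≤ a ∧ a ≤ p
    · obtain ⟨i, rfl⟩ : ∃ i : Fin p, (i : ℕ) + 1 = a := ⟨⟨a - 1, by omega⟩, by simp; omega⟩
      rw [count_NC]
    · rw [count_NC' _ _ ha, Multiset.count_eq_zero_of_notMem]
      intro h
      exact ha ⟨π.parts_pos h, hbd a h⟩
  case right =>
    intro c hc
    funext j
    show Multiset.count ((j : ℕ) + 1) (NC c) = c j
    exact count_NC c j

/-- the multiset of a finset of `Fin p`, shifted by one -/
def toM (s : Finset (Fin p)) : Multiset ℕ := s.val.map (fun j : Fin p => (j : ℕ) + 1)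

lemma hinj' : Function.Injective (fun j : Fin p => (j : ℕ) + 1) := by
  intro a b h
  simp only [add_left_inj] at h
  exact Fin.ext h

lemma toM_sum (s : Finset (Fin p)) : (toM s).sum = wS p s := rfl

lemma toM_card (s : Finset (Fin p)) : Multiset.card (toM s) = s.card := by
  simp [toM]

lemma toM_nodup (s : Finset (Fin p)) : (toM s).Nodup :=
  Multiset.Nodup.map hinj' s.nodup

lemma mem_toM {s : Finset (Fin p)} {x : ℕ} : x ∈ toM s ↔ ∃ j ∈ s, (j : ℕ) + 1 = x := by
  simp [toM]

lemma Q_eq (n m : ℕ) : Q n m p = (Qset p n m).card := by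
  rw [Q, Fintype.card_subtype]
  refine Finset.card_bij' (fun π _ => Finset.univ.filter (fun j : Fin p => ((j : ℕ) + 1) ∈ π.parts))
    (fun s hs => ⟨toM s, fun hi => by
        obtain ⟨b, -, rfl⟩ := mem_toM.mp hi
        exact Nat.succ_pos _, by
      have h := hs
      simp only [Qset, Finset.mem_filter] at h
      rw [toM_sum]
      exact h.2.1⟩) ?hi ?hj ?left ?right
  case hi =>
    intro π hπ
    rw [Finset.mem_filter] at hπ
    obtain ⟨-, hcard, hnd, hbd⟩ := hπ
    have hM : ∀ x ∈ π.parts, 1 ≤ x ∧ x ≤ p := fun x hx => ⟨π.parts_pos hx, hbd x hx⟩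
    obtain ⟨h1, h2⟩ := count_card_sum π.parts hM
    have key : ∀ j : Fin p, (if ((j : ℕ) + 1) ∈ π.parts then ((j : ℕ) + 1) else 0)
        = ((j : ℕ) + 1) * π.parts.count ((j : ℕ) + 1) := by
      intro j
      by_cases h : ((j : ℕ) + 1) ∈ π.parts
      · rw [if_pos h, Multiset.count_eq_one_of_mem hnd h, mul_one]
      · rw [if_neg h, Multiset.count_eq_zero_of_notMem h, mul_zero]
    have key2 : ∀ j : Fin p, (if ((j : ℕ) + 1) ∈ π.parts then 1 else 0)
        = π.parts.count ((j : ℕ) + 1) := by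
      intro j
      by_cases h : ((j : ℕ) + 1) ∈ π.parts
      · rw [if_pos h, Multiset.count_eq_one_of_mem hnd h]
      · rw [if_neg h, Multiset.count_eq_zero_of_notMem h]
    simp only [Qset, Finset.mem_filter]
    refine ⟨Finset.mem_univ _, ?_, ?_⟩
    · rw [wS, Finset.sum_filter, Finset.sum_congr rfl (fun j _ => key j), h2, π.parts_sum]
    · rw [Finset.card_filter, Finset.sum_congr rfl (fun j _ => key2 j), h1, hcard]
  case hj =>
    intro s hs
    have h := hs
    simp only [Qset, Finset.mem_filter] at h
    obtain ⟨-, hw, hcard⟩ := h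
    rw [Finset.mem_filter]
    refine ⟨Finset.mem_univ _, ?_, toM_nodup s, ?_⟩
    · show Multiset.card (toM s) = m
      rw [toM_card, hcard]
    · intro x hx
      obtain ⟨b, -, rfl⟩ := mem_toM.mp hx
      exact Nat.succ_le_of_lt (by simp)
  case left =>
    intro π hπ
    rw [Finset.mem_filter] at hπ
    obtain ⟨-, hcard, hnd, hbd⟩ := hπ
    ext1
    show toM (Finset.univ.filter (fun j : Fin p => ((j : ℕ) + 1) ∈ π.parts)) = π.parts
    rw [Multiset.Nodup.ext (toM_nodup _) hnd]
    intro a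
    rw [mem_toM]
    constructor
    · rintro ⟨b, hb, rfl⟩
      rw [Finset.mem_filter] at hb
      exact hb.2
    · intro h
      have ha : 1 ≤ a ∧ a ≤ p := ⟨π.parts_pos h, hbd a h⟩
      refine ⟨⟨a - 1, by omega⟩, ?_, by simp; omega⟩
      rw [Finset.mem_filter]
      refine ⟨Finset.mem_univ _, ?_⟩
      rw [show ((⟨a - 1, by omega⟩ : Fin p) : ℕ) + 1 = a by simp; omega]
      exact h
  case right =>
    intro s hs
    ext j
    simp only [Finset.mem_filter, Finset.mem_univ, true_and]
    show ((j : ℕ) + 1) ∈ toM s ↔ j ∈ s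
    rw [mem_toM]
    constructor
    · rintro ⟨b, hb, hbe⟩
      rwa [← hinj' hbe]
    · intro h
      exact ⟨j, h, rfl⟩


lemma le_of_tC (c : Fin p → ℕ) (j : Fin p) : c j ≤ tC p c :=
  Finset.single_le_sum (fun _ _ => Nat.zero_le _) (Finset.mem_univ j)

lemma sum_mul_update (w c : Fin p → ℕ) (i : Fin p) (v : ℕ) :
    ∑ j : Fin p, w j * Function.update c i v j + w i * c i
      = ∑ j : Fin p, w j * c j + w i * v := by
  have h1 : ∀ j : Fin p, w j * Function.update c i v j
      = Function.update (fun j => w j * c j) i (w i * v) j := by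
    intro j
    rcases eq_or_ne j i with rfl | hj
    · simp
    · simp [Function.update_of_ne hj]
  rw [Finset.sum_congr rfl (fun j _ => h1 j), Finset.sum_update_of_mem (Finset.mem_univ i),
    Finset.sum_eq_sum_sdiff_singleton_add (Finset.mem_univ i) (fun j => w j * c j)]
  omega

lemma wC_update (c : Fin p → ℕ) (i : Fin p) (v : ℕ) :
    wC p (Function.update c i v) + ((i : ℕ) + 1) * c i = wC p c + ((i : ℕ) + 1) * v :=
  sum_mul_update (fun j => (j : ℕ) + 1) c i v

lemma tC_update (c : Fin p → ℕ) (i : Fin p) (v : ℕ) :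
    tC p (Function.update c i v) + c i = tC p c + v := by
  have := sum_mul_update (fun _ => 1) c i v
  simpa [tC] using this

def theB (x : (Fin p → ℕ) × Finset (Fin p)) : Finset (Fin p) :=
  x.2 ∪ Finset.univ.filter fun j => 2 ≤ x.1 j

def stepAt (x : (Fin p → ℕ) × Finset (Fin p)) (i : Fin p) : (Fin p → ℕ) × Finset (Fin p) :=
  if i ∈ x.2 then (Function.update x.1 i (x.1 i + 2), x.2.erase i)
  else (Function.update x.1 i (x.1 i - 2), insert i x.2)

def step (x : (Fin p → ℕ) × Finset (Fin p)) : (Fin p → ℕ) × Finset (Fin p) :=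
  if h : (theB x).Nonempty then stepAt x ((theB x).max' h) else x

lemma step_master {n m : ℕ} (c : Fin p → ℕ) (s : Finset (Fin p))
    (h1 : wC p c + 2 * wS p s = n) (h2 : tC p c + 2 * s.card = m)
    (hnf : ¬(s = ∅ ∧ ∀ i, c i ≤ 1)) :
    wC p (step (c, s)).1 + 2 * wS p (step (c, s)).2 = n
      ∧ tC p (step (c, s)).1 + 2 * (step (c, s)).2.card = m
      ∧ ¬((step (c, s)).2 = ∅ ∧ ∀ i, (step (c, s)).1 i ≤ 1)
      ∧ step (step (c, s)) = (c, s)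
      ∧ ((step (c, s)).2.card = s.card + 1 ∨ s.card = (step (c, s)).2.card + 1) := by
  have hB : (theB (c, s)).Nonempty := by
    by_cases hs : s = ∅
    · subst hs
      obtain ⟨i, hi⟩ : ∃ x, 1 < c x := by simpa using hnf
      exact ⟨i, by simp only [theB, Finset.mem_union, Finset.mem_filter, Finset.mem_univ,
        true_and]; omega⟩
    · obtain ⟨a, ha⟩ := Finset.nonempty_iff_ne_empty.mpr hs
      exact ⟨a, Finset.mem_union_left _ ha⟩
  set i := (theB (c, s)).max' hB with hidef
  have hiB : i ∈ theB (c, s) := Finset.max'_mem _ hB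
  have himax : ∀ j ∈ theB (c, s), j ≤ i := fun j hj => Finset.le_max' _ j hj
  have hstep : step (c, s) = stepAt (c, s) i := dif_pos hB
  by_cases hi : i ∈ s
  · -- move i from s into c
    have hstep2 : step (c, s) = (Function.update c i (c i + 2), s.erase i) := by
      rw [hstep, stepAt, if_pos hi]
    set c' := Function.update c i (c i + 2) with hc'
    set s' := s.erase i with hs'
    have e1 := wC_update c i (c i + 2)
    rw [← hc'] at e1
    have e1' : ((i : ℕ) + 1) * (c i + 2) = ((i : ℕ) + 1) * c i + 2 * ((i : ℕ) + 1) := by ring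
    have e2 := tC_update c i (c i + 2)
    rw [← hc'] at e2
    have e3 : wS p s' + ((i : ℕ) + 1) = wS p s := Finset.sum_erase_add s _ hi
    have e4 : s'.card + 1 = s.card := Finset.card_erase_add_one hi
    have hc'i : c' i = c i + 2 := Function.update_self i _ c
    have h1' : wC p c' + 2 * wS p s' = n := by omega
    have h2' : tC p c' + 2 * s'.card = m := by omega
    rw [hstep2]
    dsimp only
    refine ⟨h1', h2', ?_, ?_, by omega⟩
    · rintro ⟨-, hall⟩
      have := hall i
      omega
    · -- step of the new pair returns (c, s)
      have hiB' : i ∈ theB (c', s') := by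
        apply Finset.mem_union_right
        simp only [Finset.mem_filter, Finset.mem_univ, true_and]
        omega
      have himax' : ∀ j ∈ theB (c', s'), j ≤ i := by
        intro j hj
        rcases Finset.mem_union.mp hj with hj | hj
        · exact himax j (Finset.mem_union_left _ (Finset.mem_of_mem_erase hj))
        · rcases eq_or_ne j i with rfl | hji
          · exact le_refl _
          · simp only [Finset.mem_filter, Finset.mem_univ, true_and] at hj
            rw [hc', Function.update_of_ne hji] at hj
            exact himax j (Finset.mem_union_right _ (by
              simp only [Finset.mem_filter, Finset.mem_univ, true_and]; exact hj))
      have hB' : (theB (c', s')).Nonempty := ⟨i, hiB'⟩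
      have hmax'eq : (theB (c', s')).max' hB' = i :=
        le_antisymm (Finset.max'_le _ _ _ himax') (Finset.le_max' _ _ hiB')
      have : step (c', s') = stepAt (c', s') i := by
        rw [step, dif_pos hB', hmax'eq]
      rw [this, stepAt, if_neg (by simp only [hs']; exact Finset.notMem_erase i s)]
      simp only
      refine Prod.ext ?_ ?_
      · show Function.update c' i (c' i - 2) = c
        rw [hc'i, hc']
        have : c i + 2 - 2 = c i := by omega
        rw [this, Function.update_idem, Function.update_eq_self]
      · show insert i s' = s
        rw [hs']
        exact Finset.insert_erase hi
  · -- move i from c into s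
    have hci : 2 ≤ c i := by
      rcases Finset.mem_union.mp hiB with h | h
      · exact absurd h hi
      · simpa using h
    have hstep2 : step (c, s) = (Function.update c i (c i - 2), insert i s) := by
      rw [hstep, stepAt, if_neg hi]
    set c' := Function.update c i (c i - 2) with hc'
    set s' := insert i s with hs'
    have e1 := wC_update c i (c i - 2)
    rw [← hc'] at e1
    have e1' : ((i : ℕ) + 1) * c i = ((i : ℕ) + 1) * (c i - 2) + 2 * ((i : ℕ) + 1) := by
      have hv : c i = (c i - 2) + 2 := by omega
      calc ((i : ℕ) + 1) * c i = ((i : ℕ) + 1) * ((c i - 2) + 2) := by rw [← hv]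
      _ = ((i : ℕ) + 1) * (c i - 2) + 2 * ((i : ℕ) + 1) := by ring
    have e2 := tC_update c i (c i - 2)
    rw [← hc'] at e2
    have e3 : wS p s' = ((i : ℕ) + 1) + wS p s := Finset.sum_insert hi
    have e4 : s'.card = s.card + 1 := Finset.card_insert_of_notMem hi
    have hc'i : c' i = c i - 2 := Function.update_self i _ c
    have h1' : wC p c' + 2 * wS p s' = n := by omega
    have h2' : tC p c' + 2 * s'.card = m := by omega
    rw [hstep2]
    dsimp only
    refine ⟨h1', h2', ?_, ?_, by omega⟩
    · rintro ⟨habs, -⟩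
      exact (Finset.insert_nonempty i s).ne_empty habs
    · have hiB' : i ∈ theB (c', s') :=
        Finset.mem_union_left _ (Finset.mem_insert_self i s)
      have himax' : ∀ j ∈ theB (c', s'), j ≤ i := by
        intro j hj
        rcases Finset.mem_union.mp hj with hj | hj
        · rcases Finset.mem_insert.mp hj with rfl | hj
          · exact le_refl _
          · exact himax j (Finset.mem_union_left _ hj)
        · rcases eq_or_ne j i with rfl | hji
          · exact le_refl _
          · simp only [Finset.mem_filter, Finset.mem_univ, true_and] at hj
            rw [hc', Function.update_of_ne hji] at hj
            exact himax j (Finset.mem_union_right _ (by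
              simp only [Finset.mem_filter, Finset.mem_univ, true_and]; exact hj))
      have hB' : (theB (c', s')).Nonempty := ⟨i, hiB'⟩
      have hmax'eq : (theB (c', s')).max' hB' = i :=
        le_antisymm (Finset.max'_le _ _ _ himax') (Finset.le_max' _ _ hiB')
      have : step (c', s') = stepAt (c', s') i := by
        rw [step, dif_pos hB', hmax'eq]
      rw [this, stepAt, if_pos (by rw [hs']; exact Finset.mem_insert_self i s)]
      simp only
      refine Prod.ext ?_ ?_
      · show Function.update c' i (c' i + 2) = c
        rw [hc'i, hc']
        have : c i - 2 + 2 = c i := by omega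
        rw [this, Function.update_idem, Function.update_eq_self]
      · show (insert i s).erase i = s
        exact Finset.erase_insert hi


def Fset (p n m : ℕ) : Finset ((Fin p → ℕ) × Finset (Fin p)) :=
  ((Finset.Iic fun _ => m) ×ˢ Finset.univ).filter fun x =>
    wC p x.1 + 2 * wS p x.2 = n ∧ tC p x.1 + 2 * x.2.card = m

lemma mem_Fset {n m : ℕ} {x : (Fin p → ℕ) × Finset (Fin p)} :
    x ∈ Fset p n m ↔ wC p x.1 + 2 * wS p x.2 = n ∧ tC p x.1 + 2 * x.2.card = m := by
  simp only [Fset, Finset.mem_filter, Finset.mem_product, Finset.mem_Iic, Finset.mem_univ,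
    and_true, and_iff_right_iff_imp]
  rintro ⟨-, h2⟩
  intro j
  calc x.1 j ≤ tC p x.1 := le_of_tC x.1 j
  _ ≤ m := by omega

lemma sum_nonfix (p n m : ℕ) :
    ∑ x ∈ (Fset p n m).filter (fun x => ¬(x.2 = ∅ ∧ ∀ i, x.1 i ≤ 1)),
      ((-1 : ℤ) ^ x.2.card) = 0 := by
  refine Finset.sum_involution (fun x _ => step x) ?h ?ne ?mem ?inv
  case h =>
    intro x hx
    obtain ⟨c, s⟩ := x
    rw [Finset.mem_filter, mem_Fset] at hx
    obtain ⟨⟨h1, h2⟩, hnf⟩ := hx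
    obtain ⟨-, -, -, -, hcard⟩ := step_master c s h1 h2 hnf
    dsimp only at hcard ⊢
    rcases hcard with h | h
    · rw [h, pow_succ]
      ring
    · rw [h, pow_succ]
      ring
  case ne =>
    intro x hx _
    obtain ⟨c, s⟩ := x
    rw [Finset.mem_filter, mem_Fset] at hx
    obtain ⟨⟨h1, h2⟩, hnf⟩ := hx
    obtain ⟨-, -, -, -, hcard⟩ := step_master c s h1 h2 hnf
    intro heq
    rw [heq] at hcard
    dsimp only at hcard
    omega
  case mem =>
    intro x hx
    obtain ⟨c, s⟩ := x
    rw [Finset.mem_filter, mem_Fset] at hx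
    obtain ⟨⟨h1, h2⟩, hnf⟩ := hx
    obtain ⟨h1', h2', hnf', -, -⟩ := step_master c s h1 h2 hnf
    rw [Finset.mem_filter, mem_Fset]
    exact ⟨⟨h1', h2'⟩, hnf'⟩
  case inv =>
    intro x hx
    obtain ⟨c, s⟩ := x
    rw [Finset.mem_filter, mem_Fset] at hx
    obtain ⟨⟨h1, h2⟩, hnf⟩ := hx
    obtain ⟨-, -, -, hss, -⟩ := step_master c s h1 h2 hnf
    exact hss

lemma sum_fix (p n m : ℕ) :
    ∑ x ∈ (Fset p n m).filter (fun x => x.2 = ∅ ∧ ∀ i, x.1 i ≤ 1),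
      ((-1 : ℤ) ^ x.2.card) = (Q n m p : ℤ) := by
  have hone : ∀ x ∈ (Fset p n m).filter (fun x => x.2 = ∅ ∧ ∀ i, x.1 i ≤ 1),
      ((-1 : ℤ) ^ x.2.card) = 1 := by
    intro x hx
    rw [Finset.mem_filter] at hx
    rw [hx.2.1]
    simp
  rw [Finset.sum_congr rfl hone, Finset.sum_const, nsmul_eq_mul, mul_one, Q_eq]
  norm_cast
  refine Finset.card_bij' (fun x _ => Finset.univ.filter (fun j => x.1 j = 1))
    (fun s _ => ((fun j => if j ∈ s then 1 else 0), (∅ : Finset (Fin p))))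
    ?hi ?hj ?left ?right
  case hi =>
    intro x hx
    rw [Finset.mem_filter, mem_Fset] at hx
    obtain ⟨⟨h1, h2⟩, hes, hle⟩ := hx
    rw [hes] at h1 h2
    simp only [wS, Finset.sum_empty, Finset.card_empty, mul_zero, add_zero] at h1 h2
    simp only [Qset, Finset.mem_filter, Finset.mem_univ, true_and]
    constructor
    · rw [wS, Finset.sum_filter, ← h1, wC]
      apply Finset.sum_congr rfl
      intro j _
      rcases Nat.le_one_iff_eq_zero_or_eq_one.mp (hle j) with h | h <;> rw [h] <;> simp
    · rw [Finset.card_filter, ← h2, tC]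
      apply Finset.sum_congr rfl
      intro j _
      rcases Nat.le_one_iff_eq_zero_or_eq_one.mp (hle j) with h | h <;> rw [h] <;> simp
  case hj =>
    intro s hs
    simp only [Qset, Finset.mem_filter, Finset.mem_univ, true_and] at hs
    obtain ⟨hw, hcard⟩ := hs
    rw [Finset.mem_filter, mem_Fset]
    refine ⟨⟨?_, ?_⟩, rfl, fun j => by dsimp only; split <;> omega⟩
    · show wC p (fun j => if j ∈ s then 1 else 0) + 2 * wS p (∅ : Finset (Fin p)) = n
      simp only [wC, wS, Finset.sum_empty, mul_zero, add_zero, mul_ite, mul_one]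
      rw [Finset.sum_ite_mem, Finset.univ_inter]
      exact hw
    · show tC p (fun j => if j ∈ s then 1 else 0) + 2 * (∅ : Finset (Fin p)).card = m
      simp only [tC, Finset.card_empty, mul_zero, add_zero]
      rw [Finset.sum_ite_mem, Finset.univ_inter, ← hcard, Finset.card_eq_sum_ones]
  case left =>
    intro x hx
    rw [Finset.mem_filter] at hx
    obtain ⟨-, hes, hle⟩ := hx
    obtain ⟨c, s⟩ := x
    dsimp only at hes hle ⊢
    subst hes
    simp only [Prod.mk.injEq, and_true]
    funext j
    simp only [Finset.mem_filter, Finset.mem_univ, true_and]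
    rcases Nat.le_one_iff_eq_zero_or_eq_one.mp (hle j) with h | h <;> rw [h] <;> simp
  case right =>
    intro s hs
    ext j
    dsimp only
    simp only [Finset.mem_filter, Finset.mem_univ, true_and]
    by_cases h : j ∈ s <;> simp [h]


lemma hfib (p n m k l : ℕ) (hk : k < n / 2 + 1) (hl : l < m / 2 + 1) :
    (Fset p n m).filter (fun x => (wS p x.2, x.2.card) = (k, l))
      = Pset p (n - 2 * k) (m - 2 * l) ×ˢ Qset p k l := by
  ext ⟨c, s⟩
  simp only [Finset.mem_filter, mem_Fset, Finset.mem_product, Pset, Qset, Finset.mem_Iic,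
    Finset.mem_univ, true_and, Prod.mk.injEq, Pi.le_def]
  constructor
  · rintro ⟨⟨h1, h2⟩, hw, hc⟩
    refine ⟨⟨fun j => ?_, by omega, by omega⟩, by omega, by omega⟩
    calc c j ≤ tC p c := le_of_tC c j
    _ ≤ m - 2 * l := by omega
  · rintro ⟨⟨hle, hwc, htc⟩, hw, hc⟩
    exact ⟨⟨by omega, by omega⟩, by omega, by omega⟩

end helpers

theorem stmt_4 (n m p : ℕ) :
    (Q n m p : ℤ) = ∑ k ∈ Finset.range (n / 2 + 1), ∑ l ∈ Finset.range (m / 2 + 1),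
      (-1 : ℤ) ^ l * P (n - 2 * k) (m - 2 * l) p * Q k l p := by
  have hmaps : ∀ x ∈ Fset p n m,
      (wS p x.2, x.2.card) ∈ (Finset.range (n / 2 + 1)) ×ˢ (Finset.range (m / 2 + 1)) := by
    intro x hx
    rw [mem_Fset] at hx
    rw [Finset.mem_product, Finset.mem_range, Finset.mem_range]
    omega
  have key := Finset.sum_fiberwise_of_maps_to hmaps (fun x => ((-1 : ℤ) ^ x.2.card))
  have hsplit : ∑ x ∈ Fset p n m, ((-1 : ℤ) ^ x.2.card) = (Q n m p : ℤ) := by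
    rw [← Finset.sum_filter_add_sum_filter_not (Fset p n m)
      (fun x => x.2 = ∅ ∧ ∀ i, x.1 i ≤ 1), sum_fix, sum_nonfix, add_zero]
  rw [← hsplit, ← key, Finset.sum_product]
  apply Finset.sum_congr rfl
  intro k hk
  apply Finset.sum_congr rfl
  intro l hl
  rw [Finset.mem_range] at hk hl
  rw [hfib p n m k l hk hl, Finset.sum_product]
  have hcardl : ∀ s ∈ Qset p k l, s.card = l := by
    intro s hs
    simp only [Qset, Finset.mem_filter] at hs
    exact hs.2.2
  calc ∑ c ∈ Pset p (n - 2 * k) (m - 2 * l), ∑ s ∈ Qset p k l, ((-1 : ℤ) ^ ((c, s).2.card))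
      = ∑ c ∈ Pset p (n - 2 * k) (m - 2 * l), ∑ s ∈ Qset p k l, ((-1 : ℤ) ^ l) := by
        apply Finset.sum_congr rfl
        intro c _
        apply Finset.sum_congr rfl
        intro s hs
        rw [show ((c, s).2) = s from rfl, hcardl s hs]
  _ = ((Pset p (n - 2 * k) (m - 2 * l)).card : ℤ) * ((Qset p k l).card : ℤ) * (-1 : ℤ) ^ l := by
        rw [Finset.sum_const, Finset.sum_const, nsmul_eq_mul, nsmul_eq_mul]
        ring
  _ = (-1 : ℤ) ^ l * P (n - 2 * k) (m - 2 * l) p * Q k l p := by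
        rw [P_eq, Q_eq]
        ring
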